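/- Self-loop factorization: let 𝒢 = (V, ℰ) be a finite multigraph containing a self-loop e = vv, and let 𝒢̂ be the multigraph with the self-loop deleted. Then the number of (k+1)-tuples of edge-disjoint subgraphs partitioning ℰ satisfying the source/connectivity conditions of a 'partition of 𝒢' (as defined in the paper) equals (k+1) times the corresponding count for 𝒢̂, weighted by signs; i.e., R(𝒢) = (k+1) R(𝒢̂), where R(𝒢) := Σ_𝒯 (-1)^{n(𝒯)-1}(n(𝒯)-1)! over distinct partitions 𝒯 of 𝒢. -/

import Mathlib

open scoped Classical BigOperators symmDiff

/-- Number of endpoints of the edge `e` equal to `u` (a self-loop counts twice). -/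
def inc {V ε : Type*} [DecidableEq V] (ep : ε → V × V) (e : ε) (u : V) : ℕ :=
  (if (ep e).1 = u then 1 else 0) + (if (ep e).2 = u then 1 else 0)

/-- Boundary (odd-degree vertex set) of the `i`-th part of the edge-colouring `c`. -/
def partBnd {V ε : Type*} [Fintype V] [DecidableEq V] [Fintype ε] {k : ℕ}
    (ep : ε → V × V) (c : ε → Fin (k + 1)) (i : ℕ) : Finset V :=
  Finset.univ.filter fun u =>
    Odd (∑ e ∈ Finset.univ.filter (fun e => ((c e : ℕ) = i)), inc ep e u)

/-- Connectivity of `a` and `b` using only edges coloured `i` or `j`. -/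
def partConn {V ε : Type*} {k : ℕ} (ep : ε → V × V) (c : ε → Fin (k + 1))
    (i j : ℕ) (a b : V) : Prop :=
  Relation.ReflTransGen
    (fun x y => ∃ e, ((c e : ℕ) = i ∨ (c e : ℕ) = j) ∧
      (ep e = (x, y) ∨ ep e = (y, x))) a b

/-- An (ordered representative of a) partition `𝒯` of the multigraph with edges `ε`,
in the sense of the paper: the first `n-1` parts have nonempty even boundaries
forming, together with `P_n := ∂Γ_n Δ {u₀,v₀}`, a partition of the marked set `M`
into even blocks; the remaining parts are sourceless; and `u₀` is not connected to
`v₀` in the union of parts `n` and `n+1`. -/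
def Admissible {V ε : Type*} [Fintype V] [DecidableEq V] [Fintype ε] {k : ℕ}
    (ep : ε → V × V) (u₀ v₀ : V) (M : Finset V) (n : ℕ) (c : ε → Fin (k + 1)) : Prop :=
  1 ≤ n ∧ n ≤ k ∧
  (∀ i : ℕ, i < n - 1 → (partBnd ep c i).Nonempty ∧ Even (partBnd ep c i).card) ∧
  (∀ i : ℕ, n ≤ i → partBnd ep c i = ∅) ∧
  (partBnd ep c (n - 1) ∆ {u₀, v₀}).Nonempty ∧
  Even (partBnd ep c (n - 1) ∆ {u₀, v₀}).card ∧
  (∀ i < n - 1, ∀ i' < n - 1, i ≠ i' → Disjoint (partBnd ep c i) (partBnd ep c i')) ∧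
  (∀ i < n - 1, Disjoint (partBnd ep c i) (partBnd ep c (n - 1) ∆ {u₀, v₀})) ∧
  ((Finset.range (n - 1)).biUnion (partBnd ep c) ∪ (partBnd ep c (n - 1) ∆ {u₀, v₀}) = M) ∧
  ¬ partConn ep c (n - 1) n u₀ v₀

/-- `R(𝒢) = Σ_𝒯 (-1)^{n(𝒯)-1}(n(𝒯)-1)!`, written as a sum over ordered
representatives (each distinct `𝒯` has exactly `(n(𝒯)-1)!` ordered representatives,
so each contributes `(-1)^{n(𝒯)-1}(n(𝒯)-1)!`). -/
noncomputable def Rgraph {V ε : Type*} [Fintype V] [DecidableEq V] [Fintype ε]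
    [DecidableEq ε] (ep : ε → V × V) (k : ℕ) (u₀ v₀ : V) (M : Finset V) : ℝ :=
  ∑ n ∈ Finset.Icc 1 k, ∑ c : ε → Fin (k + 1),
    if Admissible ep u₀ v₀ M n c then (-1 : ℝ) ^ (n - 1) else 0


section SelfLoopAux
set_option linter.unusedSectionVars false
variable {V ε : Type*} [Fintype V] [DecidableEq V] [Fintype ε] [DecidableEq ε] {k : ℕ}

lemma partBnd_restrict (ep : ε → V × V) (e₀ : ε) (x : V) (hloop : ep e₀ = (x, x))
    (c : ε → Fin (k+1)) (i : ℕ) :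
    partBnd ep c i
      = partBnd (fun e : {e : ε // e ≠ e₀} => ep e.1) (fun e => c e.1) i := by
  ext u
  simp only [partBnd, Finset.mem_filter, Finset.mem_univ, true_and]
  have h1 : ∑ e ∈ Finset.univ.filter (fun e => ((c e : ℕ) = i)), inc ep e u
      = (if ((c e₀ : ℕ) = i) then inc ep e₀ u else 0)
        + ∑ e ∈ Finset.univ.filter
            (fun e : {e : ε // e ≠ e₀} => ((c e.1 : ℕ) = i)), inc ep e.1 u := by
    rw [Finset.sum_filter, Finset.sum_filter,
      ← Finset.add_sum_erase Finset.univ _ (Finset.mem_univ e₀),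
      Finset.sum_subtype (p := fun e => e ≠ e₀) (Finset.univ.erase e₀) (fun x => by simp)]
  rw [h1]
  have h2 : Even (if ((c e₀ : ℕ) = i) then inc ep e₀ u else 0) := by
    split
    · simp only [inc, hloop]
      split <;> simp
    · exact Even.zero
  obtain ⟨t, ht⟩ := h2
  rw [ht]
  simp only [inc]
  rw [Nat.odd_iff, Nat.odd_iff]
  omega

lemma partConn_restrict (ep : ε → V × V) (e₀ : ε) (x : V) (hloop : ep e₀ = (x, x))
    (c : ε → Fin (k+1)) (i j : ℕ) (a b : V) :
    partConn ep c i j a b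
      ↔ partConn (fun e : {e : ε // e ≠ e₀} => ep e.1) (fun e => c e.1) i j a b := by
  constructor
  · intro h
    induction h with
    | refl => exact Relation.ReflTransGen.refl
    | tail _ step ih =>
      rename_i p q _
      obtain ⟨e, hc, hpq⟩ := step
      by_cases he : e = e₀
      · subst he
        have : p = q := by
          rcases hpq with h' | h' <;> rw [hloop] at h' <;>
            (injection h' with h1 h2; rw [← h1, ← h2])
        exact this ▸ ih
      · exact ih.tail ⟨⟨e, he⟩, hc, hpq⟩
  · intro h
    exact Relation.ReflTransGen.mono (fun p q ⟨e, hc, hpq⟩ => ⟨e.1, hc, hpq⟩) _ _ h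

lemma admissible_restrict (ep : ε → V × V) (e₀ : ε) (x : V) (hloop : ep e₀ = (x, x))
    (u₀ v₀ : V) (M : Finset V) (n : ℕ) (c : ε → Fin (k+1)) :
    Admissible ep u₀ v₀ M n c
      ↔ Admissible (fun e : {e : ε // e ≠ e₀} => ep e.1) u₀ v₀ M n (fun e => c e.1) := by
  have hB : partBnd ep c = partBnd (fun e : {e : ε // e ≠ e₀} => ep e.1) (fun e => c e.1) :=
    funext (partBnd_restrict ep e₀ x hloop c)
  unfold Admissible
  rw [hB, partConn_restrict ep e₀ x hloop c]

end SelfLoopAux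

/-- Self-loop factorization: deleting a self-loop `e₀` divides `R` by `k+1`:
`R(𝒢) = (k+1) R(𝒢̂)`. -/
theorem selfloop_factorization {V ε : Type*} [Fintype V] [DecidableEq V]
    [Fintype ε] [DecidableEq ε] (ep : ε → V × V) (k : ℕ) (hk : 1 ≤ k)
    (j : Fin (2 * k) → V) (hj : Function.Injective j) (u₀ v₀ : V)
    (e₀ : ε) (x : V) (hloop : ep e₀ = (x, x))
    (hbnd : (Finset.univ.filter fun u => Odd (∑ e, inc ep e u))
      = (Finset.univ.image j) ∆ {u₀, v₀}) :
    Rgraph ep k u₀ v₀ (Finset.univ.image j)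
      = (k + 1) * Rgraph (fun e : {e : ε // e ≠ e₀} => ep e.1) k u₀ v₀
          (Finset.univ.image j) := by
  classical
  have hAdm : ∀ (n : ℕ) (a : Fin (k+1)) (g : {e : ε // e ≠ e₀} → Fin (k+1)),
      Admissible ep u₀ v₀ (Finset.univ.image j) n
        ((Equiv.funSplitAt e₀ (Fin (k+1))).symm (a, g))
      ↔ Admissible (fun e : {e : ε // e ≠ e₀} => ep e.1) u₀ v₀ (Finset.univ.image j) n g := by
    intro n a g
    rw [admissible_restrict ep e₀ x hloop]
    have : (fun e : {e : ε // e ≠ e₀} =>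
        (Equiv.funSplitAt e₀ (Fin (k+1))).symm (a, g) e.1) = g := by
      funext e
      simp [Equiv.funSplitAt, Equiv.piSplitAt, e.2]
    rw [this]
  unfold Rgraph
  rw [Finset.mul_sum]
  refine Finset.sum_congr rfl fun n _ => ?_
  rw [← ((Equiv.funSplitAt e₀ (Fin (k+1))).symm.sum_comp
    (fun c => if Admissible ep u₀ v₀ (Finset.univ.image j) n c then (-1 : ℝ) ^ (n - 1) else 0)),
    Fintype.sum_prod_type]
  have : ∀ a : Fin (k+1), ∑ g : {e : ε // e ≠ e₀} → Fin (k+1),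
      (if Admissible ep u₀ v₀ (Finset.univ.image j) n
        ((Equiv.funSplitAt e₀ (Fin (k+1))).symm (a, g)) then (-1 : ℝ) ^ (n - 1) else 0)
      = ∑ g : {e : ε // e ≠ e₀} → Fin (k+1),
        (if Admissible (fun e : {e : ε // e ≠ e₀} => ep e.1) u₀ v₀
          (Finset.univ.image j) n g then (-1 : ℝ) ^ (n - 1) else 0) := by
    intro a
    refine Finset.sum_congr rfl fun g _ => ?_
    rw [hAdm n a g]
  simp only [this]
  rw [Finset.sum_const, Finset.card_univ, Fintype.card_fin, nsmul_eq_mul]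
  push_cast
  ring
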